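/- Let R be a finite ring with unity, let χ be an additive character of R, let x ∈ R, and let K be the largest left ideal of R contained in (x)_ℓ ∩ {y ∈ R : χ(y) = 1}. Then C_χ(x) = Σ_{E ⊆ M_R((x)_ℓ) with ⋂_{M∈E} M ⊆ K} (−1)^{|E|} · |⋂_{M∈E} M|, where the intersection over the empty subset E = ∅ is taken to be (x)_ℓ. -/

import Mathlib

open scoped BigOperators
open Classical

variable {R : Type*}

/-- The left ideal of `R` generated by `x`, i.e. `(x)_ℓ`. -/
def lgen [Ring R] (x : R) : Submodule R R := Submodule.span R {x}

/-- `[x]_ℓ = {y : (y)_ℓ = (x)_ℓ}`. -/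
def classL [Ring R] (x : R) : Set R := {y | lgen y = lgen x}

/-- The character sum `C_χ(x) = ∑_{s ∈ [x]_ℓ} χ(s)`. -/
noncomputable def CchiL [Ring R] (χ : AddChar R ℂ) (x : R) : ℂ :=
  ∑ᶠ s ∈ classL x, χ s

/-- The set `M_R(J)` of maximal `R`-left ideals of `J`. -/
def maxROf [Ring R] (J : Submodule R R) : Set (Submodule R R) :=
  {M | M < J ∧ ∀ I' : Submodule R R, M < I' → ¬ I' < J}

/-- The set `M_R(J, K)` of maximal `R`-left ideals of `J` containing `K`. -/
def maxROfAbove [Ring R] (J K : Submodule R R) : Set (Submodule R R) :=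
  {M | M ∈ maxROf J ∧ K ≤ M}

/-- Intersection of the family `E` of left ideals, with the convention that the
empty intersection is `J`. -/
noncomputable def interIn [Ring R] (J : Submodule R R) (E : Set (Submodule R R)) :
    Submodule R R :=
  if E = ∅ then J else sInf E

/-- The Möbius function `μ_R(I, J)` on left ideals of `R`. -/
noncomputable def muR [Ring R] (I J : Submodule R R) : ℤ :=
  if I = J then 1
  else if I < J ∧ ∃ E : Set (Submodule R R),
      E ⊆ maxROf J ∧ E.Nonempty ∧ interIn J E = I then
    (Nat.card {E : Set (Submodule R R) //
        E ⊆ maxROf J ∧ interIn J E = I ∧ Even (Nat.card E)} : ℤ)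
      - (Nat.card {E : Set (Submodule R R) //
        E ⊆ maxROf J ∧ interIn J E = I ∧ Odd (Nat.card E)} : ℤ)
  else 0

/-- The function `φ_R(I, J)` on left ideals of `R`. -/
noncomputable def phiR [Ring R] (I J : Submodule R R) : ℂ :=
  if I = J then 1
  else if I < J ∧ ∃ E : Set (Submodule R R),
      E ⊆ maxROf J ∧ E.Nonempty ∧ interIn J E = I then
    ∏ᶠ M ∈ maxROfAbove J I, ((Nat.card J : ℂ) / (Nat.card M : ℂ) - 1)
  else 1


section aux
variable [Ring R] [Fintype R]

private lemma finSubmod : Finite (Submodule R R) :=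
  Finite.of_injective (fun M => (M : Set R)) SetLike.coe_injective

private lemma exists_max_above (I J : Submodule R R) (h : I < J) :
    ∃ M ∈ maxROf J, I ≤ M := by
  have : Finite (Submodule R R) := finSubmod
  obtain ⟨M, hM, hmax⟩ := Set.Finite.exists_maximalFor id {I' | I ≤ I' ∧ I' < J}
    (Set.toFinite _) ⟨I, le_refl I, h⟩
  refine ⟨M, ⟨hM.2, ?_⟩, hM.1⟩
  intro I' h1 h2
  exact absurd (hmax ⟨hM.1.trans h1.le, h2⟩ h1.le) h1.not_ge

private lemma mem_classL_iff (x y : R) :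
    y ∈ classL x ↔ y ∈ lgen x ∧ ∀ M ∈ maxROf (lgen x), y ∉ M := by
  constructor
  · intro (h : lgen y = lgen x)
    have hy : y ∈ lgen y := Submodule.mem_span_singleton_self y
    refine ⟨h ▸ hy, ?_⟩
    intro M hM hyM
    have hle : lgen y ≤ M := Submodule.span_le.2 (Set.singleton_subset_iff.2 hyM)
    rw [h] at hle
    exact absurd hle (not_le_of_gt hM.1)
  · rintro ⟨hyJ, hmax⟩
    have hle : lgen y ≤ lgen x := Submodule.span_le.2 (Set.singleton_subset_iff.2 hyJ)
    by_contra hne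
    have hne' : lgen y ≠ lgen x := hne
    obtain ⟨M, hM, hleM⟩ := exists_max_above _ _ (lt_of_le_of_ne hle hne')
    exact hmax M hM (hleM (Submodule.mem_span_singleton_self y))

private lemma charSum (χ : AddChar R ℂ) (I : Submodule R R) :
    ∑ s : R, (if s ∈ I then χ s else 0) =
      if ∀ s ∈ I, χ s = 1 then (Nat.card I : ℂ) else 0 := by
  split_ifs with h
  · rw [Finset.sum_congr rfl (fun s _ => show (if s ∈ I then χ s else 0) = (if s ∈ I then (1:ℂ) else 0) by
      split_ifs with hs; exact h s hs; rfl)]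
    rw [Finset.sum_boole]
    simp [Nat.card_eq_fintype_card, Fintype.card_subtype]
  · push_neg at h
    obtain ⟨a, haI, ha⟩ := h
    set S := ∑ s : R, (if s ∈ I then χ s else 0) with hS
    have hmem : ∀ s : R, a + s ∈ I ↔ s ∈ I := by
      intro s
      constructor
      · intro hh; have := I.sub_mem hh haI; rwa [add_sub_cancel_left] at this
      · exact fun hh => I.add_mem haI hh
    have key : χ a * S = S := by
      rw [hS, Finset.mul_sum]
      calc ∑ s : R, χ a * (if s ∈ I then χ s else 0)
          = ∑ s : R, (if s ∈ I then χ (a + s) else 0) := by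
            refine Finset.sum_congr rfl fun s _ => ?_
            split_ifs with hs
            · rw [AddChar.map_add_eq_mul]
            · rw [mul_zero]
        _ = ∑ s : R, (if a + s ∈ I then χ (a + s) else 0) := by
            refine Finset.sum_congr rfl fun s _ => ?_
            rw [hmem s]
        _ = S := by
            rw [hS]
            exact Fintype.sum_equiv (Equiv.addLeft a) _ _ (fun s => rfl)
    have h0 : (χ a - 1) * S = 0 := by rw [sub_mul, one_mul, key, sub_self]
    exact (mul_eq_zero.1 h0).resolve_left (sub_ne_zero_of_ne ha)

omit [Fintype R] in
private lemma interIn_eq (J : Submodule R R) (E : Set (Submodule R R))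
    (hE : E ⊆ maxROf J) : interIn J E = J ⊓ sInf E := by
  unfold interIn
  split_ifs with h
  · simp [h]
  · obtain ⟨M, hM⟩ := Set.nonempty_iff_ne_empty.2 h
    exact (inf_eq_right.2 (le_trans (sInf_le hM) (hE hM).1.le)).symm

end aux

theorem stmt5 [Ring R] [Fintype R] (χ : AddChar R ℂ) (x : R) (K : Submodule R R)
    (hK : (K : Set R) ⊆ (lgen x : Set R) ∩ {y | χ y = 1})
    (hKmax : ∀ L : Submodule R R,
      (L : Set R) ⊆ (lgen x : Set R) ∩ {y | χ y = 1} → L ≤ K) :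
    CchiL χ x =
      ∑ᶠ E ∈ {E : Set (Submodule R R) |
          E ⊆ maxROf (lgen x) ∧ interIn (lgen x) E ≤ K},
        ((-1 : ℂ) ^ (Nat.card E) * (Nat.card (interIn (lgen x) E) : ℂ)) := by
  classical
  have hfin : Finite (Submodule R R) := finSubmod
  have hMfin : (maxROf (lgen x)).Finite := Set.toFinite _
  set 𝓜 : Finset (Submodule R R) := hMfin.toFinset with h𝓜
  have hclass : (classL x).Finite := Set.toFinite _
  have hcond : ∀ I : Submodule R R, I ≤ lgen x → ((∀ s ∈ I, χ s = 1) ↔ I ≤ K) := by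
    intro I hIJ
    constructor
    · intro h
      exact hKmax I (fun s hs => ⟨hIJ hs, h s hs⟩)
    · intro h s hs
      exact (hK (h hs)).2
  have hsubM : ∀ E : Finset (Submodule R R), E ∈ 𝓜.powerset →
      (↑E : Set (Submodule R R)) ⊆ maxROf (lgen x) := by
    intro E hE M hM
    exact (Set.Finite.mem_toFinset hMfin).1 (Finset.mem_powerset.1 hE hM)
  have hmemInter : ∀ (E : Finset (Submodule R R)),
      (↑E : Set (Submodule R R)) ⊆ maxROf (lgen x) →
      ∀ s : R, s ∈ interIn (lgen x) ↑E ↔ s ∈ lgen x ∧ ∀ M ∈ E, s ∈ M := by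
    intro E hE s
    rw [interIn_eq _ _ hE, Submodule.mem_inf, Submodule.mem_sInf]
    simp
  have hinterle : ∀ (E : Finset (Submodule R R)),
      (↑E : Set (Submodule R R)) ⊆ maxROf (lgen x) →
      interIn (lgen x) ↑E ≤ lgen x := by
    intro E hE; rw [interIn_eq _ _ hE]; exact inf_le_left
  have h1 : CchiL χ x = ∑ s : R, (if s ∈ classL x then χ s else 0) := by
    rw [CchiL, ← hclass.coe_toFinset, finsum_mem_coe_finset]
    rw [Finset.sum_congr rfl (fun s hs =>
      (if_pos (show s ∈ (↑hclass.toFinset : Set R) by simpa using hs)).symm)]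
    exact Finset.sum_subset (Finset.subset_univ _)
      (fun s _ hns => if_neg (by simpa using hns))
  have h2 : ∀ s : R, (if s ∈ classL x then χ s else 0) =
      (if s ∈ lgen x then χ s else 0) * ∏ M ∈ 𝓜, (if s ∈ M then 0 else (1:ℂ)) := by
    intro s
    by_cases hs : s ∈ classL x
    · obtain ⟨hsJ, hsM⟩ := (mem_classL_iff x s).1 hs
      rw [if_pos hs, if_pos hsJ, Finset.prod_eq_one, mul_one]
      intro M hM
      rw [if_neg (hsM M ((Set.Finite.mem_toFinset hMfin).1 hM))]
    · rw [if_neg hs]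
      rw [mem_classL_iff] at hs
      push_neg at hs
      by_cases hsJ : s ∈ lgen x
      · obtain ⟨M, hM, hsM⟩ := hs hsJ
        rw [Finset.prod_eq_zero ((Set.Finite.mem_toFinset hMfin).2 hM)
          (show (if s ∈ M then (0:ℂ) else 1) = 0 from if_pos hsM), mul_zero]
      · rw [if_neg hsJ, zero_mul]
  have h3 : ∀ s : R, ∏ M ∈ 𝓜, (if s ∈ M then 0 else (1:ℂ)) =
      ∑ E ∈ 𝓜.powerset, (-1 : ℂ) ^ E.card * ∏ M ∈ E, (if s ∈ M then (1:ℂ) else 0) := by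
    intro s
    have hfac : ∀ M : Submodule R R, (if s ∈ M then 0 else (1:ℂ)) =
        (-(if s ∈ M then (1:ℂ) else 0)) + 1 := by
      intro M; split_ifs <;> ring
    rw [Finset.prod_congr rfl (fun M _ => hfac M), Finset.prod_add]
    refine Finset.sum_congr rfl fun E hE => ?_
    rw [Finset.prod_const_one, mul_one]
    have : ∏ M ∈ E, (-(if s ∈ M then (1:ℂ) else 0)) =
        ∏ M ∈ E, ((-1) * (if s ∈ M then (1:ℂ) else 0)) :=
      Finset.prod_congr rfl fun M _ => by ring
    rw [this, Finset.prod_mul_distrib, Finset.prod_const]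
  have h4 : CchiL χ x = ∑ E ∈ 𝓜.powerset, (-1:ℂ)^E.card *
      ∑ s : R, (if s ∈ interIn (lgen x) ↑E then χ s else 0) := by
    rw [h1]
    rw [Finset.sum_congr rfl (fun s _ => (h2 s).trans (by rw [h3 s]))]
    rw [Finset.sum_congr rfl (fun s _ => Finset.mul_sum _ _ _)]
    rw [Finset.sum_comm]
    refine Finset.sum_congr rfl fun E hE => ?_
    rw [Finset.mul_sum]
    refine Finset.sum_congr rfl fun s _ => ?_
    have hE' := hsubM E hE
    rw [← mul_assoc, mul_comm (if s ∈ lgen x then χ s else 0) ((-1:ℂ)^E.card), mul_assoc]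
    congr 1
    by_cases hsJ : s ∈ lgen x
    · by_cases hall : ∀ M ∈ E, s ∈ M
      · rw [if_pos hsJ, Finset.prod_eq_one (fun M hM => if_pos (hall M hM)), mul_one,
          if_pos ((hmemInter E hE' s).2 ⟨hsJ, hall⟩)]
      · push_neg at hall
        obtain ⟨M, hME, hsM⟩ := hall
        rw [Finset.prod_eq_zero hME
          (show (if s ∈ M then (1:ℂ) else 0) = 0 from if_neg hsM), mul_zero,
          if_neg (fun hc => hsM (((hmemInter E hE' s).1 hc).2 M hME))]
    · rw [if_neg hsJ, zero_mul, if_neg (fun hc => hsJ ((hmemInter E hE' s).1 hc).1)]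
  have h5 : CchiL χ x = ∑ E ∈ 𝓜.powerset,
      (-1:ℂ)^E.card * (if interIn (lgen x) ↑E ≤ K
        then (Nat.card (interIn (lgen x) ↑E) : ℂ) else 0) := by
    rw [h4]
    refine Finset.sum_congr rfl fun E hE => ?_
    congr 1
    rw [charSum, if_congr (hcond _ (hinterle E (hsubM E hE))) rfl rfl]
  have h6 : CchiL χ x = ∑ E ∈ Finset.filter
      (fun E : Finset (Submodule R R) =>
        interIn (lgen x) (↑E : Set (Submodule R R)) ≤ K) 𝓜.powerset,
      ((-1:ℂ)^E.card * (Nat.card (interIn (lgen x) (↑E : Set (Submodule R R))) : ℂ)) := by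
    rw [h5, Finset.sum_filter]
    refine Finset.sum_congr rfl fun E _ => ?_
    split_ifs with h
    · rfl
    · rw [mul_zero]
  have hS : {E : Set (Submodule R R) |
      E ⊆ maxROf (lgen x) ∧ interIn (lgen x) E ≤ K}.Finite := Set.toFinite _
  rw [h6, ← hS.coe_toFinset, finsum_mem_coe_finset]
  refine Finset.sum_nbij' (fun E : Finset (Submodule R R) => (↑E : Set (Submodule R R)))
    (fun A : Set (Submodule R R) => (Set.toFinite A).toFinset) ?_ ?_ ?_ ?_ ?_
  · intro E hE
    rw [Finset.mem_filter] at hE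
    rw [Set.Finite.mem_toFinset]
    exact ⟨hsubM E hE.1, hE.2⟩
  · intro A hA
    rw [Set.Finite.mem_toFinset] at hA
    rw [Finset.mem_filter]
    refine ⟨Finset.mem_powerset.2 ?_, ?_⟩
    · intro M hM
      exact (Set.Finite.mem_toFinset hMfin).2 (hA.1 ((Set.Finite.mem_toFinset _).1 hM))
    · rw [Set.Finite.coe_toFinset]
      exact hA.2
  · intro E _
    ext M
    simp
    exact Iff.rfl
  · intro A _
    exact Set.Finite.coe_toFinset _
  · intro E _
    have hcard : Nat.card (↑E : Set (Submodule R R)) = E.card := by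
      simp [Nat.card_coe_set_eq, Set.ncard_coe_finset]
    rw [hcard]
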